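/- arXiv:2306.14139 — 2 statements merged into one kernel-verified Lean document; each statement's English description precedes it below -/
import Mathlib

section
/- Fix x₀ ∈ ℝⁿ and s > 0, and set c = (4(n−1)·binom(n,k)^{1/k}·s²)^{(n−2)/4}. Then u(x) = c·(s² − |x−x₀|²)^{1−n/2} is a positive k-admissible solution of (*) on the open ball B_s(x₀) with u(x) → ∞ as x → ∂B_s(x₀), and v(x) = c·(|x−x₀|² − s²)^{1−n/2} is a positive k-admissible solution of (*) on ℝⁿ ∖ B̄_s(x₀) with v(x) → ∞ as x → ∂B_s(x₀). -/
open scoped BigOperators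
open Metric Filter

noncomputable section

/-- Euclidean space ℝⁿ. -/
abbrev Eucl (n : ℕ) : Type := EuclideanSpace ℝ (Fin n)

/-- First partial derivative `∂ᵢ u (x)`. -/
def pd (n : ℕ) (u : Eucl n → ℝ) (x : Eucl n) (i : Fin n) : ℝ :=
  fderiv ℝ u x (EuclideanSpace.single i (1 : ℝ))

/-- Second partial derivative `∂ᵢ∂ⱼ u (x)`. -/
def pd2 (n : ℕ) (u : Eucl n → ℝ) (x : Eucl n) (i j : Fin n) : ℝ :=
  fderiv ℝ (fun y => pd n u y j) x (EuclideanSpace.single i (1 : ℝ))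

/-- The matrix `W[u]` with entries
`W_ij[u] = (n−2)∂ᵢ∂ⱼu − (n/u)∂ᵢu ∂ⱼu + (Δu + |∇u|²/u) δᵢⱼ`. -/
def Wmat (n : ℕ) (u : Eucl n → ℝ) (x : Eucl n) : Matrix (Fin n) (Fin n) ℝ :=
  fun i j =>
    ((n : ℝ) - 2) * pd2 n u x i j
      - ((n : ℝ) / u x) * pd n u x i * pd n u x j
      + ((∑ l, pd2 n u x l l) + (∑ l, (pd n u x l) ^ 2) / u x) *
          (if i = j then (1 : ℝ) else 0)

/-- kth elementary symmetric polynomial of a vector in ℝⁿ. -/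
def esymm (n : ℕ) (k : ℕ) (v : Fin n → ℝ) : ℝ :=
  ∑ s ∈ Finset.powersetCard k (Finset.univ : Finset (Fin n)), ∏ i ∈ s, v i

/-- `σ_k(A) := σ_k(λ(A))`, the kth elementary symmetric function of the eigenvalues
of a symmetric matrix (junk value `0` for non-symmetric matrices). -/
def sigmaM (n : ℕ) (k : ℕ) (A : Matrix (Fin n) (Fin n) ℝ) : ℝ :=
  letI := Classical.propDecidable A.IsHermitian
  if h : A.IsHermitian then esymm n k h.eigenvalues else 0

/-- `λ(A) ∈ Γ_k`, i.e. `σ_j(λ(A)) > 0` for `j = 1, …, k`. -/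
def inGammaM (n k : ℕ) (A : Matrix (Fin n) (Fin n) ℝ) : Prop :=
  ∀ j : ℕ, 1 ≤ j → j ≤ k → 0 < sigmaM n j A

/-- `v ∈ Γ_k` for vectors. -/
def inGammaV (n k : ℕ) (v : Fin n → ℝ) : Prop :=
  ∀ j : ℕ, 1 ≤ j → j ≤ k → 0 < esymm n j v

/-- The Garding cone `Γ_k` as a subset of ℝⁿ. -/
def GammaSet (n k : ℕ) : Set (Fin n → ℝ) := {v | inGammaV n k v}

/-- k-admissibility of a function on a set. -/
def Admissible (n k : ℕ) (s : Set (Eucl n)) (u : Eucl n → ℝ) : Prop :=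
  ∀ x ∈ s, inGammaM n k (Wmat n u x)

/-- Equation (*): `σ_k^{1/k}(W[u]) = ((n−2)/2) u^{(n+2)/(n−2)}` at a point. -/
def EqStar (n k : ℕ) (u : Eucl n → ℝ) (x : Eucl n) : Prop :=
  (sigmaM n k (Wmat n u x)) ^ ((1 : ℝ) / k)
    = (((n : ℝ) - 2) / 2) * (u x) ^ (((n : ℝ) + 2) / ((n : ℝ) - 2))

/-- `S` is a (nonempty) compact smooth embedded submanifold of ℝⁿ of codimension `m`:
locally a regular level set of a smooth submersion. -/
def IsSmoothCompactSubmanifold (n m : ℕ) (S : Set (Eucl n)) : Prop :=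
  IsCompact S ∧ S.Nonempty ∧
    ∀ x ∈ S, ∃ U : Set (Eucl n), IsOpen U ∧ x ∈ U ∧
      ∃ φ : Eucl n → EuclideanSpace ℝ (Fin m),
        ContDiffOn ℝ (⊤ : ℕ∞) φ U ∧
        (∀ y ∈ U, Function.Surjective (fderiv ℝ φ y)) ∧
        S ∩ U = {y ∈ U | φ y = 0}

/-- `u(x) → ∞` as `x → ∂Ω`. -/
def BlowsUpAtBoundary (n : ℕ) (Ω : Set (Eucl n)) (u : Eucl n → ℝ) : Prop :=
  ∀ C : ℝ, ∃ δ > (0 : ℝ), ∀ x ∈ Ω, Metric.infDist x (frontier Ω) < δ → C < u x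

/-- `ρ(x)^{n/2−1} u(x) → L` as `x → ∂Ω`, where `ρ(x) = dist(x, ∂Ω)`. -/
def BoundaryRate (n : ℕ) (Ω : Set (Eucl n)) (u : Eucl n → ℝ) (L : ℝ) : Prop :=
  ∀ ε > (0 : ℝ), ∃ δ > (0 : ℝ), ∀ x ∈ Ω, Metric.infDist x (frontier Ω) < δ →
    |(Metric.infDist x (frontier Ω)) ^ ((n : ℝ) / 2 - 1) * u x - L| < ε

/-- `((n−1)·binom(n,k)^{1/k})^{(n−2)/4}`. -/
def growthConst (n k : ℕ) : ℝ :=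
  (((n : ℝ) - 1) * ((n.choose k : ℝ) ^ ((1 : ℝ) / k))) ^ (((n : ℝ) - 2) / 4)

/-- `(4(n−1)·binom(n,k)^{1/k}·s²)^{(n−2)/4}`. -/
def ballConst (n k : ℕ) (s : ℝ) : ℝ :=
  (4 * ((n : ℝ) - 1) * ((n.choose k : ℝ) ^ ((1 : ℝ) / k)) * s ^ 2) ^ (((n : ℝ) - 2) / 4)

/-- The vector `v_m` whose first `n−m+1` coordinates equal `n−m` and whose
last `m−1` coordinates equal `2−m`. -/
def vvec (n m : ℕ) : Fin n → ℝ :=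
  fun i => if (i : ℕ) < n - m + 1 then (n : ℝ) - (m : ℝ) else 2 - (m : ℝ)

/-- `(2/(n−2)) u^{−(n+2)/(n−2)} W[u]`. -/
def Wscaled (n : ℕ) (u : Eucl n → ℝ) (x : Eucl n) : Matrix (Fin n) (Fin n) ℝ :=
  ((2 / ((n : ℝ) - 2)) * (u x) ^ (-(((n : ℝ) + 2) / ((n : ℝ) - 2)))) • Wmat n u x

/-- Equation (**): `σ_k((2/(n−2))u^{−(n+2)/(n−2)}W[u]) + α σ_{k−1}(…) = α₀` at a point. -/
def EqGen (n k : ℕ) (α α₀ : Eucl n → ℝ) (u : Eucl n → ℝ) (x : Eucl n) : Prop :=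
  sigmaM n k (Wscaled n u x) + α x * sigmaM n (k - 1) (Wscaled n u x) = α₀ x

/-- Subsolution of (*) on a set. -/
def IsSubsolutionStar (n k : ℕ) (s : Set (Eucl n)) (u : Eucl n → ℝ) : Prop :=
  ∀ x ∈ s, inGammaM n k (Wmat n u x) ∧
    (((n : ℝ) - 2) / 2) * (u x) ^ (((n : ℝ) + 2) / ((n : ℝ) - 2))
      ≤ (sigmaM n k (Wmat n u x)) ^ ((1 : ℝ) / k)

/-- Supersolution of (*) on a set. -/
def IsSupersolutionStar (n k : ℕ) (s : Set (Eucl n)) (u : Eucl n → ℝ) : Prop :=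
  ∀ x ∈ s, ¬ inGammaM n k (Wmat n u x) ∨
    (sigmaM n k (Wmat n u x)) ^ ((1 : ℝ) / k)
      ≤ (((n : ℝ) - 2) / 2) * (u x) ^ (((n : ℝ) + 2) / ((n : ℝ) - 2))

/-- The matrix `𝒲[v] = ∇²v − ∇v⊗∇v + (Δv/(n−2) + |∇v|²)·I`. -/
def calW (n : ℕ) (v : Eucl n → ℝ) (x : Eucl n) : Matrix (Fin n) (Fin n) ℝ :=
  fun i j =>
    pd2 n v x i j - pd n v x i * pd n v x j
      + ((∑ l, pd2 n v x l l) / ((n : ℝ) - 2) + ∑ l, (pd n v x l) ^ 2) *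
          (if i = j then (1 : ℝ) else 0)

/-- Equation (***): `σ_k((n−2)e^{−2v}𝒲[v]) + α σ_{k−1}((n−2)e^{−2v}𝒲[v]) = α₀` at a point. -/
def EqTriple (n k : ℕ) (α α₀ v : Eucl n → ℝ) (x : Eucl n) : Prop :=
  sigmaM n k ((((n : ℝ) - 2) * Real.exp (-2 * v x)) • calW n v x)
    + α x * sigmaM n (k - 1) ((((n : ℝ) - 2) * Real.exp (-2 * v x)) • calW n v x)
    = α₀ x

/-- The operator `G[v] = σ_k(𝒲[v])/σ_{k−1}(𝒲[v]) − (α₀ e^{2kv}/(n−2)^k)·(1/σ_{k−1}(𝒲[v]))`. -/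
def Gop (n k : ℕ) (α₀ : Eucl n → ℝ) (v : Eucl n → ℝ) (x : Eucl n) : ℝ :=
  sigmaM n k (calW n v x) / sigmaM n (k - 1) (calW n v x)
    - (α₀ x * Real.exp (2 * (k : ℝ) * v x) / ((n : ℝ) - 2) ^ k)
        * (1 / sigmaM n (k - 1) (calW n v x))


/-! ### Auxiliary machinery -/

section AuxMachinery

variable {n : ℕ}

/-- The squared-distance function written as a sum of squares. -/
def qf (x₀ : Eucl n) (y : Eucl n) : ℝ := ∑ i, (y i - x₀ i)^2

/-- The derivative of `qf`. -/
def qd (x₀ x : Eucl n) : Eucl n →L[ℝ] ℝ :=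
  ∑ i, (2*(x i - x₀ i)) • (EuclideanSpace.proj i : Eucl n →L[ℝ] ℝ)

lemma hasFDerivAt_coord (x₀ : Eucl n) (x : Eucl n) (i : Fin n) :
    HasFDerivAt (fun y : Eucl n => y i - x₀ i)
      (EuclideanSpace.proj i : Eucl n →L[ℝ] ℝ) x :=
  (PiLp.hasFDerivAt_apply 2 x i).sub_const (x₀ i)

lemma hasFDerivAt_qf (x₀ x : Eucl n) : HasFDerivAt (qf x₀) (qd x₀ x) x := by
  have h : ∀ i : Fin n, HasFDerivAt (fun y : Eucl n => (y i - x₀ i)^2)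
      ((2*(x i - x₀ i)) • (EuclideanSpace.proj i : Eucl n →L[ℝ] ℝ)) x := by
    intro i
    have h1 := hasFDerivAt_coord x₀ x i
    have h2 := h1.fun_mul h1
    have e : (fun y : Eucl n => (y i - x₀ i) * (y i - x₀ i))
        = fun y : Eucl n => (y i - x₀ i)^2 := by funext y; ring
    rw [e] at h2
    refine h2.congr_fderiv ?_
    rw [← add_smul]; congr 1; ring
  have := HasFDerivAt.fun_sum (fun i (_ : i ∈ Finset.univ) => h i)
  exact this

lemma qd_apply (x₀ x : Eucl n) (j : Fin n) :
    qd x₀ x (EuclideanSpace.single j (1:ℝ)) = 2*(x j - x₀ j) := by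
  simp [qd, ContinuousLinearMap.sum_apply, EuclideanSpace.single_apply]

lemma qf_eq_norm (x₀ y : Eucl n) : qf x₀ y = ‖y - x₀‖^2 := by
  rw [EuclideanSpace.norm_eq, Real.sq_sqrt]
  · simp [qf, PiLp.sub_apply, Real.norm_eq_abs, sq_abs]
  · positivity

lemma qf_continuous (x₀ : Eucl n) : Continuous (qf x₀) := by
  have e : (qf x₀) = fun y => ‖y - x₀‖^2 := funext (qf_eq_norm x₀)
  rw [e]
  exact ((continuous_id.sub continuous_const).norm).pow 2

/-- The radial profile `a·|x−x₀|² + b`. -/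
def gfun (a b : ℝ) (x₀ : Eucl n) (y : Eucl n) : ℝ := a * qf x₀ y + b

/-- The radial function `c·(a|x−x₀|²+b)^p`. -/
def wfun (a b c p : ℝ) (x₀ : Eucl n) (y : Eucl n) : ℝ := c * (gfun a b x₀ y) ^ p

lemma hasFDerivAt_gfun (a b : ℝ) (x₀ : Eucl n) (x : Eucl n) :
    HasFDerivAt (gfun a b x₀) (a • qd x₀ x) x :=
  ((hasFDerivAt_qf x₀ x).const_mul a).add_const b

lemma hasFDerivAt_rpow_gfun (a b : ℝ) (x₀ : Eucl n) (x : Eucl n)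
    (hgx : gfun a b x₀ x ≠ 0) (r : ℝ) :
    HasFDerivAt (fun y => (gfun a b x₀ y) ^ r)
      ((r * (gfun a b x₀ x) ^ (r-1) * a) • qd x₀ x) x := by
  have h := (hasFDerivAt_gfun a b x₀ x).rpow_const (Or.inl hgx) (p := r)
  rwa [smul_smul] at h

lemma hasFDerivAt_wfun (a b c p : ℝ) (x₀ : Eucl n) (x : Eucl n)
    (hgx : gfun a b x₀ x ≠ 0) :
    HasFDerivAt (wfun a b c p x₀)
      ((c * (p * (gfun a b x₀ x) ^ (p-1) * a)) • qd x₀ x) x := by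
  have h := (hasFDerivAt_rpow_gfun a b x₀ x hgx p).const_mul c
  rwa [smul_smul] at h

lemma pd_wfun (a b c p : ℝ) (x₀ : Eucl n) (x : Eucl n)
    (hgx : gfun a b x₀ x ≠ 0) (j : Fin n) :
    pd n (wfun a b c p x₀) x j
      = 2 * c * p * a * (gfun a b x₀ x) ^ (p-1) * (x j - x₀ j) := by
  rw [pd, (hasFDerivAt_wfun a b c p x₀ x hgx).fderiv, ContinuousLinearMap.smul_apply,
    qd_apply, smul_eq_mul]
  ring

lemma pd2_wfun (a b c p : ℝ) (x₀ : Eucl n) (x : Eucl n)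
    (hgx : 0 < gfun a b x₀ x) (i j : Fin n) :
    pd2 n (wfun a b c p x₀) x i j
      = 2 * c * p * a * (gfun a b x₀ x) ^ (p-1) * (if i = j then (1:ℝ) else 0)
        + 4 * c * p * (p-1) * a * a * (gfun a b x₀ x) ^ (p-2)
            * (x i - x₀ i) * (x j - x₀ j) := by
  have hopen : IsOpen {y : Eucl n | 0 < gfun a b x₀ y} := by
    have : Continuous (gfun a b x₀) :=
      (continuous_const.mul (qf_continuous x₀)).add continuous_const
    exact isOpen_lt continuous_const this
  have hmem : {y : Eucl n | 0 < gfun a b x₀ y} ∈ nhds x := hopen.mem_nhds hgx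
  set H : Eucl n → ℝ :=
    fun y => (2*c*p*a) * ((gfun a b x₀ y) ^ (p-1) * (y j - x₀ j)) with hH
  have heq : (fun y => pd n (wfun a b c p x₀) y j) =ᶠ[nhds x] H := by
    filter_upwards [hmem] with y hy
    rw [pd_wfun a b c p x₀ y hy.ne' j, hH]
    ring
  have hr := hasFDerivAt_rpow_gfun a b x₀ x hgx.ne' (p-1)
  have hm := hasFDerivAt_coord x₀ x j
  have hprod := (hr.fun_mul hm).const_mul (2*c*p*a)
  rw [pd2, heq.fderiv_eq, hprod.fderiv]
  have e1 : (EuclideanSpace.proj j : Eucl n →L[ℝ] ℝ) (EuclideanSpace.single i (1:ℝ))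
      = (if i = j then (1:ℝ) else 0) := by
    simp [EuclideanSpace.single_apply]
    exact if_congr eq_comm rfl rfl
  have e2 : p - 1 - 1 = p - 2 := by ring
  simp only [ContinuousLinearMap.smul_apply, ContinuousLinearMap.add_apply,
    ContinuousLinearMap.coe_smul', Pi.smul_apply, e1, qd_apply, e2, smul_eq_mul]
  ring

set_option maxHeartbeats 2000000 in
lemma Wmat_wfun (a b c p : ℝ) (x₀ : Eucl n) (hn : 3 ≤ n) (s : ℝ)
    (ha : a = 1 ∨ a = -1) (hab : a * b = -s^2) (hc : 0 < c)
    (hp : p = 1 - (n:ℝ)/2) (x : Eucl n) (hgx : 0 < gfun a b x₀ x) :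
    Wmat n (wfun a b c p x₀) x
      = (2*c*((n:ℝ)-1)*((n:ℝ)-2)*s^2*(gfun a b x₀ x)^(p-2))
          • (1 : Matrix (Fin n) (Fin n) ℝ) := by
  have hN : (3:ℝ) ≤ (n:ℝ) := by exact_mod_cast hn
  set g := gfun a b x₀ x with hgdef
  set B := g ^ (p-2) with hBdef
  have hB : 0 < B := Real.rpow_pos_of_pos hgx _
  have hB1 : g ^ (p-1) = B * g := by
    rw [show p-1 = (p-2)+1 by ring, Real.rpow_add hgx, Real.rpow_one, hBdef]
  have hB2 : g ^ p = B * g^2 := by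
    rw [show p = (p-2)+2 by ring, Real.rpow_add hgx, hBdef]
    norm_num
  have hu : wfun a b c p x₀ x = c * (B * g^2) := by
    rw [wfun, ← hB2, hgdef]
  set t := qf x₀ x with htdef
  have ht : 0 ≤ t := Finset.sum_nonneg fun i _ => sq_nonneg _
  have hg : g = a * t + b := rfl
  have hsum2 : (∑ l, pd2 n (wfun a b c p x₀) x l l)
      = 2*c*p*a*(B*g)*(n:ℝ) + 4*c*p*(p-1)*a*a*B*t := by
    have h : ∀ l : Fin n, pd2 n (wfun a b c p x₀) x l l
        = 2*c*p*a*(B*g) + 4*c*p*(p-1)*a*a*B*(x l - x₀ l)^2 := by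
      intro l
      rw [pd2_wfun a b c p x₀ x hgx l l, if_pos rfl, ← hgdef, hB1, ← hBdef]
      ring
    rw [Finset.sum_congr rfl fun l _ => h l, Finset.sum_add_distrib,
      Finset.sum_const, ← Finset.mul_sum]
    simp [htdef, qf]
    ring
  have hsum1 : (∑ l, (pd n (wfun a b c p x₀) x l)^2)
      = (2*c*p*a*(B*g))^2 * t := by
    have h : ∀ l : Fin n, (pd n (wfun a b c p x₀) x l)^2
        = (2*c*p*a*(B*g))^2 * (x l - x₀ l)^2 := by
      intro l
      rw [pd_wfun a b c p x₀ x hgx.ne' l, ← hgdef, hB1]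
      ring
    rw [Finset.sum_congr rfl fun l _ => h l, ← Finset.mul_sum]
    simp [htdef, qf]
  ext i j
  rw [Matrix.smul_apply, Matrix.one_apply, Wmat, hsum2, hsum1, hu,
    pd_wfun a b c p x₀ x hgx.ne' i, pd_wfun a b c p x₀ x hgx.ne' j,
    pd2_wfun a b c p x₀ x hgx i j, ← hgdef, hB1, ← hBdef]
  have hBne := hB.ne'
  have hgne := hgx.ne'
  have hcne := hc.ne'
  rcases ha with rfl | rfl
  · have hb : b = -s^2 := by linarith [hab]
    subst hb hp
    have ht2 : t = g + s^2 := by rw [hg]; ring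
    clear_value B t g
    by_cases hij : i = j
    · rw [if_pos hij, smul_eq_mul, ht2]
      field_simp
      ring
    · rw [if_neg hij, smul_eq_mul, ht2]
      field_simp
      ring
  · have hb : b = s^2 := by linarith [hab]
    subst hb hp
    have ht2 : t = s^2 - g := by rw [hg]; ring
    clear_value B t g
    by_cases hij : i = j
    · rw [if_pos hij, smul_eq_mul, ht2]
      field_simp
      ring
    · rw [if_neg hij, smul_eq_mul, ht2]
      field_simp
      ring

lemma isHermitian_smul_one (μ : ℝ) :
    ((μ • (1 : Matrix (Fin n) (Fin n) ℝ))).IsHermitian := by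
  unfold Matrix.IsHermitian
  ext i j
  simp [Matrix.conjTranspose_apply, Matrix.one_apply, Matrix.smul_apply]
  split <;> split <;> simp_all

lemma eigenvalues_smul_one (μ : ℝ) (h : ((μ • (1 : Matrix (Fin n) (Fin n) ℝ))).IsHermitian)
    (i : Fin n) : h.eigenvalues i = μ := by
  have hm := h.mulVec_eigenvectorBasis i
  set v := (h.eigenvectorBasis i).ofLp with hv
  have hmv : (μ • (1 : Matrix (Fin n) (Fin n) ℝ)).mulVec v = μ • v := by
    rw [Matrix.smul_mulVec, Matrix.one_mulVec]
  rw [hmv] at hm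
  have hvne : v ≠ 0 := by
    have : h.eigenvectorBasis i ≠ 0 := h.eigenvectorBasis.orthonormal.ne_zero i
    simpa [hv] using this
  have hz : (μ - h.eigenvalues i) • v = 0 := by
    rw [sub_smul, hm, sub_self]
  rcases smul_eq_zero.mp hz with h1 | h1
  · linarith [sub_eq_zero.mp (by exact_mod_cast h1)]
  · exact absurd h1 hvne

lemma esymm_const (j : ℕ) (μ : ℝ) :
    esymm n j (fun _ => μ) = (n.choose j : ℝ) * μ ^ j := by
  unfold esymm
  have h : ∀ s ∈ Finset.powersetCard j (Finset.univ : Finset (Fin n)),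
      (∏ _i ∈ s, μ) = μ ^ j := by
    intro s hs
    rw [Finset.prod_const, (Finset.mem_powersetCard.mp hs).2]
  rw [Finset.sum_congr rfl h, Finset.sum_const, Finset.card_powersetCard,
    Finset.card_univ, Fintype.card_fin, nsmul_eq_mul]

lemma sigmaM_smul_one (j : ℕ) (μ : ℝ) :
    sigmaM n j (μ • (1 : Matrix (Fin n) (Fin n) ℝ)) = (n.choose j : ℝ) * μ ^ j := by
  unfold sigmaM
  rw [dif_pos (isHermitian_smul_one μ)]
  have h : (isHermitian_smul_one (n := n) μ).eigenvalues = fun _ => μ :=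
    funext (eigenvalues_smul_one μ _)
  rw [h, esymm_const]

lemma key_identity (n k : ℕ) (hn : 3 ≤ n) (hk1 : 1 ≤ k) (hkn : k ≤ n)
    (s : ℝ) (hs : 0 < s) (g : ℝ) (hg : 0 < g) :
    ((n.choose k : ℝ) ^ ((1:ℝ)/k))
        * (2*(ballConst n k s)*((n:ℝ)-1)*((n:ℝ)-2)*s^2*g^((1-(n:ℝ)/2)-2))
      = (((n:ℝ)-2)/2)
          * ((ballConst n k s) * g^(1-(n:ℝ)/2)) ^ (((n:ℝ)+2)/((n:ℝ)-2)) := by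
  have hN : (3:ℝ) ≤ (n:ℝ) := by exact_mod_cast hn
  have hN2 : (n:ℝ) - 2 ≠ 0 := by linarith
  have hch : (0:ℝ) < (n.choose k : ℝ) := by exact_mod_cast Nat.choose_pos hkn
  set Ck := (n.choose k:ℝ)^((1:ℝ)/k) with hCk
  have hCkpos : 0 < Ck := Real.rpow_pos_of_pos hch _
  have hbase : (0:ℝ) < 4*((n:ℝ)-1)*Ck*s^2 := by
    have : (0:ℝ) < (n:ℝ) - 1 := by linarith
    positivity
  have hc : ballConst n k s = (4*((n:ℝ)-1)*Ck*s^2) ^ (((n:ℝ)-2)/4) := rfl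
  have hcpos : 0 < ballConst n k s := by rw [hc]; exact Real.rpow_pos_of_pos hbase _
  have h1 : (ballConst n k s) ^ (((n:ℝ)+2)/((n:ℝ)-2))
      = ballConst n k s * (4*((n:ℝ)-1)*Ck*s^2) := by
    rw [hc, ← Real.rpow_mul hbase.le,
      show (((n:ℝ)-2)/4)*(((n:ℝ)+2)/((n:ℝ)-2)) = ((n:ℝ)-2)/4 + 1 by
        field_simp; ring,
      Real.rpow_add hbase, Real.rpow_one]
  have h2 : (g^(1-(n:ℝ)/2)) ^ (((n:ℝ)+2)/((n:ℝ)-2)) = g ^ ((1-(n:ℝ)/2)-2) := by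
    rw [← Real.rpow_mul hg.le]
    congr 1
    field_simp
    ring
  rw [Real.mul_rpow hcpos.le (Real.rpow_pos_of_pos hg _).le, h1, h2]
  ring

/-- The main pointwise statement for the radial function. -/
lemma pointwise_main (n k : ℕ) (hn : 3 ≤ n) (hk1 : 1 ≤ k) (hkn : k ≤ n)
    (x₀ : Eucl n) (s : ℝ) (hs : 0 < s) (a b : ℝ)
    (ha : a = 1 ∨ a = -1) (hab : a * b = -s^2)
    (x : Eucl n) (hgx : 0 < gfun a b x₀ x) :
    0 < wfun a b (ballConst n k s) (1 - (n:ℝ)/2) x₀ x ∧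
    inGammaM n k (Wmat n (wfun a b (ballConst n k s) (1 - (n:ℝ)/2) x₀) x) ∧
    EqStar n k (wfun a b (ballConst n k s) (1 - (n:ℝ)/2) x₀) x := by
  have hN : (3:ℝ) ≤ (n:ℝ) := by exact_mod_cast hn
  have hch : (0:ℝ) < (n.choose k : ℝ) := by exact_mod_cast Nat.choose_pos hkn
  have hbase : (0:ℝ) < 4*((n:ℝ)-1)*((n.choose k:ℝ)^((1:ℝ)/k))*s^2 := by
    have h1 : (0:ℝ) < (n:ℝ) - 1 := by linarith
    have h2 : (0:ℝ) < (n.choose k:ℝ)^((1:ℝ)/k) := Real.rpow_pos_of_pos hch _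
    positivity
  have hcpos : 0 < ballConst n k s := Real.rpow_pos_of_pos hbase _
  set c := ballConst n k s with hcdef
  set p := 1 - (n:ℝ)/2 with hpdef
  have hμpos : 0 < 2*c*((n:ℝ)-1)*((n:ℝ)-2)*s^2*(gfun a b x₀ x)^(p-2) := by
    have h1 : (0:ℝ) < (n:ℝ) - 1 := by linarith
    have h2 : (0:ℝ) < (n:ℝ) - 2 := by linarith
    have h3 : (0:ℝ) < (gfun a b x₀ x)^(p-2) := Real.rpow_pos_of_pos hgx _
    positivity
  have hW := Wmat_wfun a b c p x₀ hn s ha hab hcpos hpdef x hgx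
  refine ⟨?_, ?_, ?_⟩
  · exact mul_pos hcpos (Real.rpow_pos_of_pos hgx _)
  · intro j hj1 hjk
    rw [hW, sigmaM_smul_one]
    have hjn : j ≤ n := le_trans hjk hkn
    have : (0:ℝ) < (n.choose j : ℝ) := by exact_mod_cast Nat.choose_pos hjn
    positivity
  · rw [EqStar, hW, sigmaM_smul_one]
    set μ := 2*c*((n:ℝ)-1)*((n:ℝ)-2)*s^2*(gfun a b x₀ x)^(p-2) with hμ
    have hkR : ((k:ℝ)) ≠ 0 := by
      have : 0 < k := hk1
      positivity
    have hsplit : ((n.choose k:ℝ) * μ^k) ^ ((1:ℝ)/k)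
        = (n.choose k:ℝ)^((1:ℝ)/k) * μ := by
      rw [Real.mul_rpow hch.le (pow_nonneg hμpos.le k), ← Real.rpow_natCast μ k,
        ← Real.rpow_mul hμpos.le, show (k:ℝ) * ((1:ℝ)/k) = 1 by field_simp,
        Real.rpow_one]
    rw [hsplit, hμ, wfun]
    exact key_identity n k hn hk1 hkn s hs _ hgx

end AuxMachinery

/-- Explicit radial solutions of (*) on a ball and on the exterior of a ball,
blowing up at the sphere. -/
theorem stmt7 (n k : ℕ) (hn : 3 ≤ n) (hk1 : 1 ≤ k) (hkn : k ≤ n)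
    (x₀ : Eucl n) (s : ℝ) (hs : 0 < s)
    (u v : Eucl n → ℝ)
    (hu : ∀ x, u x = ballConst n k s * (s ^ 2 - ‖x - x₀‖ ^ 2) ^ (1 - (n : ℝ) / 2))
    (hv : ∀ x, v x = ballConst n k s * (‖x - x₀‖ ^ 2 - s ^ 2) ^ (1 - (n : ℝ) / 2)) :
    ((∀ x ∈ Metric.ball x₀ s, 0 < u x) ∧
      Admissible n k (Metric.ball x₀ s) u ∧
      (∀ x ∈ Metric.ball x₀ s, EqStar n k u x) ∧
      (∀ C : ℝ, ∃ δ > (0 : ℝ), ∀ x ∈ Metric.ball x₀ s, s - dist x x₀ < δ → C < u x)) ∧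
    ((∀ x ∈ (Metric.closedBall x₀ s)ᶜ, 0 < v x) ∧
      Admissible n k (Metric.closedBall x₀ s)ᶜ v ∧
      (∀ x ∈ (Metric.closedBall x₀ s)ᶜ, EqStar n k v x) ∧
      (∀ C : ℝ, ∃ δ > (0 : ℝ), ∀ x ∈ (Metric.closedBall x₀ s)ᶜ,
        dist x x₀ - s < δ → C < v x)) := by
  classical
  have hN : (3:ℝ) ≤ (n:ℝ) := by exact_mod_cast hn
  have hch : (0:ℝ) < (n.choose k : ℝ) := by exact_mod_cast Nat.choose_pos hkn
  have hbase : (0:ℝ) < 4*((n:ℝ)-1)*((n.choose k:ℝ)^((1:ℝ)/k))*s^2 := by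
    have h1 : (0:ℝ) < (n:ℝ) - 1 := by linarith
    have h2 : (0:ℝ) < (n.choose k:ℝ)^((1:ℝ)/k) := Real.rpow_pos_of_pos hch _
    positivity
  have hcpos : 0 < ballConst n k s := Real.rpow_pos_of_pos hbase _
  set c := ballConst n k s with hcdef
  set p := 1 - (n:ℝ)/2 with hpdef
  have hpneg : p < 0 := by rw [hpdef]; linarith
  have hu' : u = wfun (-1) (s^2) c p x₀ := by
    funext x
    rw [hu x, show s^2 - ‖x-x₀‖^2 = (-1) * ‖x-x₀‖^2 + s^2 from by ring,
      ← qf_eq_norm x₀ x]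
    rfl
  have hv' : v = wfun 1 (-s^2) c p x₀ := by
    funext x
    rw [hv x, show ‖x-x₀‖^2 - s^2 = 1 * ‖x-x₀‖^2 + (-s^2) from by ring,
      ← qf_eq_norm x₀ x]
    rfl
  subst hu' hv'
  have hgu : ∀ x ∈ Metric.ball x₀ s, 0 < gfun (-1) (s^2) x₀ x := by
    intro x hx
    have hd : ‖x - x₀‖ < s := by
      rw [← dist_eq_norm]; exact Metric.mem_ball.mp hx
    have : ‖x - x₀‖^2 < s^2 := by
      have h0 : (0:ℝ) ≤ ‖x - x₀‖ := norm_nonneg _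
      nlinarith
    rw [gfun, qf_eq_norm]
    linarith
  have hgv : ∀ x ∈ (Metric.closedBall x₀ s)ᶜ, 0 < gfun 1 (-s^2) x₀ x := by
    intro x hx
    have hd : s < ‖x - x₀‖ := by
      rw [← dist_eq_norm]
      exact lt_of_not_ge (fun h => hx (Metric.mem_closedBall.mpr h))
    have : s^2 < ‖x - x₀‖^2 := by nlinarith
    rw [gfun, qf_eq_norm]
    linarith
  have hmainu := fun x (hx : x ∈ Metric.ball x₀ s) =>
    pointwise_main n k hn hk1 hkn x₀ s hs (-1) (s^2) (Or.inr rfl) (by ring) x (hgu x hx)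
  have hmainv := fun x (hx : x ∈ (Metric.closedBall x₀ s)ᶜ) =>
    pointwise_main n k hn hk1 hkn x₀ s hs 1 (-s^2) (Or.inl rfl) (by ring) x (hgv x hx)
  constructor
  · refine ⟨fun x hx => (hmainu x hx).1, fun x hx => (hmainu x hx).2.1,
      fun x hx => (hmainu x hx).2.2, ?_⟩
    -- blow-up on the ball
    intro C
    set M : ℝ := max (C/c) 1 + 1 with hM
    have hM1 : 1 < M := by
      have := le_max_right (C/c) 1
      rw [hM]; linarith
    have hM0 : 0 < M := by linarith
    have hCM : C < c * M := by
      have h1 : C / c < M := by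
        have := le_max_left (C/c) 1
        rw [hM]; linarith
      calc C = c * (C / c) := by field_simp
        _ < c * M := by exact mul_lt_mul_of_pos_left h1 hcpos
    refine ⟨M^((1:ℝ)/p) / (2*s), by positivity, ?_⟩
    intro x hx hδ
    have hgx := hgu x hx
    have hd : ‖x - x₀‖ < s := by
      rw [← dist_eq_norm]; exact Metric.mem_ball.mp hx
    have hd0 : (0:ℝ) ≤ ‖x - x₀‖ := norm_nonneg _
    have hdist : dist x x₀ = ‖x - x₀‖ := dist_eq_norm _ _
    rw [hdist] at hδ
    set g := gfun (-1) (s^2) x₀ x with hgdef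
    have hgval : g = s^2 - ‖x - x₀‖^2 := by
      rw [hgdef, gfun, qf_eq_norm]; ring
    have hglt : g < M^((1:ℝ)/p) := by
      rw [hgval]
      have h1 : s^2 - ‖x - x₀‖^2 = (s - ‖x - x₀‖) * (s + ‖x - x₀‖) := by ring
      have h2 : s + ‖x - x₀‖ < 2*s := by linarith
      have h3 : 0 < s - ‖x - x₀‖ := by linarith
      have h4 : (s - ‖x - x₀‖) * (s + ‖x - x₀‖)
          < (M^((1:ℝ)/p) / (2*s)) * (2*s) := by
        apply mul_lt_mul' hδ.le h2 (by linarith)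
        have : 0 < M^((1:ℝ)/p) := Real.rpow_pos_of_pos hM0 _
        positivity
      rw [h1]
      calc (s - ‖x - x₀‖) * (s + ‖x - x₀‖) < (M^((1:ℝ)/p) / (2*s)) * (2*s) := h4
        _ = M^((1:ℝ)/p) := by field_simp
    have hrpow : M < g ^ p := by
      have h5 : (M^((1:ℝ)/p))^p = M := by
        rw [← Real.rpow_mul hM0.le, one_div_mul_cancel hpneg.ne, Real.rpow_one]
      calc M = (M^((1:ℝ)/p))^p := h5.symm
        _ < g ^ p := Real.rpow_lt_rpow_of_neg hgx hglt hpneg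
    have : c * M < c * g ^ p := mul_lt_mul_of_pos_left hrpow hcpos
    calc C < c * M := hCM
      _ < c * g ^ p := this
      _ = wfun (-1) (s^2) c p x₀ x := by rw [wfun, ← hgdef]
  · refine ⟨fun x hx => (hmainv x hx).1, fun x hx => (hmainv x hx).2.1,
      fun x hx => (hmainv x hx).2.2, ?_⟩
    -- blow-up outside the closed ball
    intro C
    set M : ℝ := max (C/c) 1 + 1 with hM
    have hM1 : 1 < M := by
      have := le_max_right (C/c) 1
      rw [hM]; linarith
    have hM0 : 0 < M := by linarith
    have hCM : C < c * M := by
      have h1 : C / c < M := by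
        have := le_max_left (C/c) 1
        rw [hM]; linarith
      calc C = c * (C / c) := by field_simp
        _ < c * M := by exact mul_lt_mul_of_pos_left h1 hcpos
    have hMp : 0 < M^((1:ℝ)/p) := Real.rpow_pos_of_pos hM0 _
    refine ⟨min s (M^((1:ℝ)/p) / (3*s)), by positivity, ?_⟩
    intro x hx hδ
    have hgx := hgv x hx
    have hd : s < ‖x - x₀‖ := by
      rw [← dist_eq_norm]
      exact lt_of_not_ge (fun h => hx (Metric.mem_closedBall.mpr h))
    have hdist : dist x x₀ = ‖x - x₀‖ := dist_eq_norm _ _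
    rw [hdist] at hδ
    set g := gfun 1 (-s^2) x₀ x with hgdef
    have hgval : g = ‖x - x₀‖^2 - s^2 := by
      rw [hgdef, gfun, qf_eq_norm]; ring
    have hδ1 : ‖x - x₀‖ - s < M^((1:ℝ)/p) / (3*s) :=
      lt_of_lt_of_le hδ (min_le_right _ _)
    have hδ2 : ‖x - x₀‖ - s < s := lt_of_lt_of_le hδ (min_le_left _ _)
    have hglt : g < M^((1:ℝ)/p) := by
      rw [hgval]
      have h1 : ‖x - x₀‖^2 - s^2 = (‖x - x₀‖ - s) * (‖x - x₀‖ + s) := by ring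
      have h2 : ‖x - x₀‖ + s < 3*s := by linarith
      have h4 : (‖x - x₀‖ - s) * (‖x - x₀‖ + s)
          < (M^((1:ℝ)/p) / (3*s)) * (3*s) := by
        apply mul_lt_mul' hδ1.le h2 (by linarith)
        positivity
      rw [h1]
      calc (‖x - x₀‖ - s) * (‖x - x₀‖ + s) < (M^((1:ℝ)/p) / (3*s)) * (3*s) := h4
        _ = M^((1:ℝ)/p) := by field_simp
    have hrpow : M < g ^ p := by
      have h5 : (M^((1:ℝ)/p))^p = M := by
        rw [← Real.rpow_mul hM0.le, one_div_mul_cancel hpneg.ne, Real.rpow_one]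
      calc M = (M^((1:ℝ)/p))^p := h5.symm
        _ < g ^ p := Real.rpow_lt_rpow_of_neg hgx hglt hpneg
    have : c * M < c * g ^ p := mul_lt_mul_of_pos_left hrpow hcpos
    calc C < c * M := hCM
      _ < c * g ^ p := this
      _ = wfun 1 (-s^2) c p x₀ x := by rw [wfun, ← hgdef]
end
end

section
/- There does not exist a positive k-admissible C² solution of (*) on all of ℝⁿ. -/
open scoped BigOperators
open Metric Filter

noncomputable section

lemma esymm_one (n : ℕ) (v : Fin n → ℝ) : esymm n 1 v = ∑ i, v i := by
  rw [esymm, Finset.powersetCard_one]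
  rw [Finset.sum_map]
  simp

lemma pair_eq_of_card_two {s : Finset (Fin n)} (hs : s.card = 2) (h0 : s.Nonempty) :
    ({s.min' h0, s.max' h0} : Finset (Fin n)) = s := by
  have hne : s.min' h0 ≠ s.max' h0 :=
    ne_of_lt (Finset.min'_lt_max'_of_card s (by omega))
  refine Finset.eq_of_subset_of_card_le ?_ ?_
  · intro y hy
    rcases Finset.mem_insert.mp hy with h | h
    · exact h ▸ Finset.min'_mem s h0
    · exact (Finset.mem_singleton.mp h) ▸ Finset.max'_mem s h0
  · rw [Finset.card_pair hne, hs]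

lemma nonempty_of_mem_pc2 {n : ℕ} {s : Finset (Fin n)}
    (hs : s ∈ Finset.powersetCard 2 (Finset.univ : Finset (Fin n))) : s.Nonempty := by
  refine Finset.card_pos.mp ?_
  rw [(Finset.mem_powersetCard.mp hs).2]; omega

lemma esymm_two (n : ℕ) (v : Fin n → ℝ) :
    (∑ i, v i) ^ 2 = (∑ i, (v i) ^ 2) + 2 * esymm n 2 v := by
  classical
  have key : (∑ i, v i) ^ 2
      = ∑ p ∈ (Finset.univ : Finset (Fin n)) ×ˢ Finset.univ, v p.1 * v p.2 := by
    rw [sq, Finset.sum_mul_sum, ← Finset.sum_product']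
  rw [key, ← Finset.diag_union_offDiag (Finset.univ : Finset (Fin n)),
    Finset.sum_union (Finset.disjoint_diag_offDiag _)]
  have hdiag : ∑ p ∈ (Finset.univ : Finset (Fin n)).diag, v p.1 * v p.2
      = ∑ i, (v i) ^ 2 := by
    refine Finset.sum_nbij' (fun p => p.1) (fun i => (i, i)) ?_ ?_ ?_ ?_ ?_
    · intro p hp; exact Finset.mem_univ _
    · intro i _; simp [Finset.mem_diag]
    · intro p hp
      have h := (Finset.mem_diag.mp hp).2
      exact Prod.ext rfl h
    · intro i _; rfl
    · intro p hp
      have h := (Finset.mem_diag.mp hp).2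
      rw [← h, sq]
  have hsplit : (Finset.univ : Finset (Fin n)).offDiag
      = (Finset.univ : Finset (Fin n)).offDiag.filter (fun p => p.1 < p.2)
        ∪ (Finset.univ : Finset (Fin n)).offDiag.filter (fun p => p.2 < p.1) := by
    ext p
    simp only [Finset.mem_union, Finset.mem_filter, Finset.mem_offDiag, Finset.mem_univ,
      true_and]
    constructor
    · intro h; rcases lt_or_gt_of_ne h with h' | h'
      · exact Or.inl ⟨h, h'⟩
      · exact Or.inr ⟨h, h'⟩
    · rintro (⟨h, _⟩ | ⟨h, _⟩) <;> exact h
  have hdisj : Disjoint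
      ((Finset.univ : Finset (Fin n)).offDiag.filter (fun p => p.1 < p.2))
      ((Finset.univ : Finset (Fin n)).offDiag.filter (fun p => p.2 < p.1)) := by
    refine Finset.disjoint_left.mpr ?_
    intro p hp1 hp2
    have h1 := (Finset.mem_filter.mp hp1).2
    have h2 := (Finset.mem_filter.mp hp2).2
    exact absurd (h1.trans h2) (lt_irrefl _)
  have hswap : ∑ p ∈ (Finset.univ : Finset (Fin n)).offDiag.filter (fun p => p.2 < p.1),
        v p.1 * v p.2
      = ∑ p ∈ (Finset.univ : Finset (Fin n)).offDiag.filter (fun p => p.1 < p.2),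
        v p.1 * v p.2 := by
    refine Finset.sum_nbij' (fun p => p.swap) (fun p => p.swap) ?_ ?_ ?_ ?_ ?_ <;>
      simp +contextual [Finset.mem_filter, Finset.mem_offDiag, ne_comm, mul_comm]
  have hes : esymm n 2 v
      = ∑ p ∈ (Finset.univ : Finset (Fin n)).offDiag.filter (fun p => p.1 < p.2),
        v p.1 * v p.2 := by
    rw [esymm]
    refine Finset.sum_bij'
      (fun s hs => (s.min' (nonempty_of_mem_pc2 hs), s.max' (nonempty_of_mem_pc2 hs)))
      (fun p hp => {p.1, p.2}) ?_ ?_ ?_ ?_ ?_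
    · intro s hs
      have hc := (Finset.mem_powersetCard.mp hs).2
      simp only [Finset.mem_filter, Finset.mem_offDiag, Finset.mem_univ, true_and]
      have := Finset.min'_lt_max'_of_card s (by omega : 1 < s.card)
      exact ⟨ne_of_lt this, this⟩
    · intro p hp
      simp only [Finset.mem_filter] at hp
      have hlt := hp.2
      refine Finset.mem_powersetCard.mpr ⟨Finset.subset_univ _, Finset.card_pair (ne_of_lt hlt)⟩
    · intro s hs
      exact pair_eq_of_card_two (Finset.mem_powersetCard.mp hs).2 (nonempty_of_mem_pc2 hs)
    · intro p hp
      simp only [Finset.mem_filter] at hp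
      have hlt := hp.2
      have h0 : ({p.1, p.2} : Finset (Fin n)).Nonempty := ⟨p.1, by simp⟩
      have hmin : ({p.1, p.2} : Finset (Fin n)).min' h0 = p.1 := by
        refine le_antisymm (Finset.min'_le _ _ (by simp)) ?_
        refine Finset.le_min' _ _ _ ?_
        intro y hy
        rcases Finset.mem_insert.mp hy with h | h
        · exact le_of_eq h.symm
        · exact le_of_lt (Finset.mem_singleton.mp h ▸ hlt)
      have hmax : ({p.1, p.2} : Finset (Fin n)).max' h0 = p.2 := by
        refine le_antisymm ?_ (Finset.le_max' _ _ (by simp))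
        refine Finset.max'_le _ _ _ ?_
        intro y hy
        rcases Finset.mem_insert.mp hy with h | h
        · exact le_of_lt (h ▸ hlt)
        · exact le_of_eq (Finset.mem_singleton.mp h)
      exact Prod.ext hmin hmax
    · intro s hs
      have hc := (Finset.mem_powersetCard.mp hs).2
      have h0 : s.Nonempty := Finset.card_pos.mp (by omega)
      have hne : s.min' h0 ≠ s.max' h0 :=
        ne_of_lt (Finset.min'_lt_max'_of_card s (by omega))
      conv_lhs => rw [← pair_eq_of_card_two hc h0]
      exact Finset.prod_pair hne
  rw [hdiag, hsplit, Finset.sum_union hdisj, hswap, hes]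
  ring


lemma esymm_le_choose (n k : ℕ) (v : Fin n → ℝ) (hn : 1 ≤ n) (hk1 : 1 ≤ k)
    (h1 : 0 < esymm n 1 v) (h2 : 2 ≤ k → 0 < esymm n 2 v) :
    esymm n k v ≤ (n.choose k : ℝ) * (esymm n 1 v) ^ k := by
  rcases eq_or_lt_of_le hk1 with hk | hk
  · rw [← hk, pow_one, Nat.choose_one_right]
    nlinarith [h1, (by exact_mod_cast hn : (1:ℝ) ≤ (n:ℝ))]
  · have hk2 : 2 ≤ k := hk
    have habs : ∀ i, |v i| ≤ esymm n 1 v := by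
      intro i
      have hsum : (v i) ^ 2 ≤ ∑ j, (v j) ^ 2 :=
        Finset.single_le_sum (fun j _ => sq_nonneg (v j)) (Finset.mem_univ i)
      have hid := esymm_two n v
      rw [← esymm_one n v] at hid
      have h2' := h2 hk2
      have hsq : (v i) ^ 2 ≤ (esymm n 1 v) ^ 2 := by nlinarith
      nlinarith [abs_nonneg (v i), sq_abs (v i)]
    have h1' : (0:ℝ) ≤ esymm n 1 v := le_of_lt h1
    calc esymm n k v
        ≤ ∑ s ∈ Finset.powersetCard k (Finset.univ : Finset (Fin n)),
            (esymm n 1 v) ^ k := by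
          refine Finset.sum_le_sum ?_
          intro s hs
          have hcard := (Finset.mem_powersetCard.mp hs).2
          calc ∏ i ∈ s, v i ≤ |∏ i ∈ s, v i| := le_abs_self _
            _ = ∏ i ∈ s, |v i| := Finset.abs_prod s v
            _ ≤ ∏ i ∈ s, esymm n 1 v :=
                Finset.prod_le_prod (fun i _ => abs_nonneg _) (fun i _ => habs i)
            _ = (esymm n 1 v) ^ k := by rw [Finset.prod_const, hcard]
      _ = (n.choose k : ℝ) * (esymm n 1 v) ^ k := by
          rw [Finset.sum_const, Finset.card_powersetCard, Finset.card_univ,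
            Fintype.card_fin, nsmul_eq_mul]

lemma trace_eq_sum_eigenvalues {m : ℕ} (A : Matrix (Fin m) (Fin m) ℝ)
    (h : A.IsHermitian) : A.trace = ∑ i, h.eigenvalues i := by
  rw [h.trace_eq_sum_eigenvalues]
  simp


lemma trace_W (n : ℕ) (u : Eucl n → ℝ) (x : Eucl n) (hux : u x ≠ 0) :
    (Wmat n u x).trace = (2 * ((n : ℝ) - 1)) * ∑ l, pd2 n u x l l := by
  have h0 : (Wmat n u x).trace
      = ∑ i, (((n : ℝ) - 2) * pd2 n u x i i
          - ((n : ℝ) / u x) * pd n u x i * pd n u x i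
          + ((∑ l, pd2 n u x l l) + (∑ l, (pd n u x l) ^ 2) / u x)) := by
    simp [Matrix.trace, Matrix.diag, Wmat]
  rw [h0, Finset.sum_add_distrib, Finset.sum_sub_distrib, Finset.sum_const,
    Finset.card_univ, Fintype.card_fin, nsmul_eq_mul, ← Finset.mul_sum]
  have h2 : ∑ i, ((n : ℝ) / u x) * pd n u x i * pd n u x i
      = ((n : ℝ) / u x) * ∑ l, (pd n u x l) ^ 2 := by
    rw [Finset.mul_sum]; exact Finset.sum_congr rfl fun i _ => by ring
  rw [h2]
  field_simp
  ring

lemma laplacian_lower (n k : ℕ) (hn : 3 ≤ n) (hk1 : 1 ≤ k) (hkn : k ≤ n)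
    (u : Eucl n → ℝ) (x : Eucl n) (hux : 0 < u x)
    (hG : inGammaM n k (Wmat n u x)) (hEq : EqStar n k u x) :
    (((n : ℝ) - 2) / (4 * ((n : ℝ) - 1) * ((n.choose k : ℝ) ^ ((1 : ℝ) / k)))) *
      (u x) ^ (((n : ℝ) + 2) / ((n : ℝ) - 2)) ≤ ∑ l, pd2 n u x l l := by
  have hn3 : (3 : ℝ) ≤ (n : ℝ) := by exact_mod_cast hn
  by_cases h : (Wmat n u x).IsHermitian
  swap
  · exfalso
    have h1 := hG 1 le_rfl hk1
    simp only [sigmaM] at h1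
    rw [dif_neg h] at h1
    exact lt_irrefl 0 h1
  set v := h.eigenvalues with hv
  have hsig : ∀ j, sigmaM n j (Wmat n u x) = esymm n j v := by
    intro j; simp only [sigmaM]; rw [dif_pos h]
  have h1 : 0 < esymm n 1 v := by rw [← hsig]; exact hG 1 le_rfl hk1
  have h2 : 2 ≤ k → 0 < esymm n 2 v := fun h2k => by
    rw [← hsig]; exact hG 2 one_le_two h2k
  have hk0 : 0 < esymm n k v := by rw [← hsig]; exact hG k hk1 le_rfl
  set Δ := ∑ l, pd2 n u x l l with hΔ
  have htr : esymm n 1 v = 2 * ((n : ℝ) - 1) * Δ := by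
    rw [esymm_one, ← trace_eq_sum_eigenvalues _ h, trace_W n u x (ne_of_gt hux)]
  have hΔpos : 0 < Δ := by nlinarith
  set P := (u x) ^ (((n : ℝ) + 2) / ((n : ℝ) - 2)) with hP
  have hPpos : 0 < P := Real.rpow_pos_of_pos hux _
  have hkR : ((k : ℝ)) ≠ 0 := Nat.cast_ne_zero.mpr (by omega)
  have hEq' : esymm n k v = ((((n : ℝ) - 2) / 2) * P) ^ k := by
    have hE : (sigmaM n k (Wmat n u x)) ^ ((1 : ℝ) / k)
        = (((n : ℝ) - 2) / 2) * P := hEq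
    rw [hsig] at hE
    calc esymm n k v = ((esymm n k v) ^ ((1 : ℝ) / k)) ^ (k : ℕ) := by
          rw [← Real.rpow_natCast ((esymm n k v) ^ ((1 : ℝ) / k)) k,
            ← Real.rpow_mul hk0.le, one_div, inv_mul_cancel₀ hkR, Real.rpow_one]
      _ = ((((n : ℝ) - 2) / 2) * P) ^ (k : ℕ) := by rw [hE]
  have hle := esymm_le_choose n k v (by omega) hk1 h1 h2
  rw [hEq', htr] at hle
  set C := (n.choose k : ℝ) with hC0
  have hC : 0 < C := by rw [hC0]; exact_mod_cast Nat.choose_pos hkn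
  have hCne : C ≠ 0 := ne_of_gt hC
  set Ck := C ^ ((1 : ℝ) / k) with hCk0
  have hCk : 0 < Ck := Real.rpow_pos_of_pos hC _
  have hCkk : Ck ^ (k : ℕ) = C := by
    rw [hCk0, ← Real.rpow_natCast (C ^ ((1 : ℝ) / k)) k, ← Real.rpow_mul hC.le,
      one_div, inv_mul_cancel₀ hkR, Real.rpow_one]
  by_contra hcon
  push_neg at hcon
  have hstep : 2 * ((n : ℝ) - 1) * Δ < ((n : ℝ) - 2) / (2 * Ck) * P := by
    have h2n : (0 : ℝ) < 2 * ((n : ℝ) - 1) := by nlinarith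
    have := mul_lt_mul_of_pos_left hcon h2n
    calc 2 * ((n : ℝ) - 1) * Δ
        < 2 * ((n : ℝ) - 1) * ((((n : ℝ) - 2) / (4 * ((n : ℝ) - 1) * Ck)) * P) := this
      _ = ((n : ℝ) - 2) / (2 * Ck) * P := by
          have hne1 : ((n : ℝ) - 1) ≠ 0 := by nlinarith
          have hckne : Ck ≠ 0 := ne_of_gt hCk
          field_simp
          ring
  have hpow : C * (2 * ((n : ℝ) - 1) * Δ) ^ k < C * (((n : ℝ) - 2) / (2 * Ck) * P) ^ k := by
    refine mul_lt_mul_of_pos_left ?_ hC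
    refine pow_lt_pow_left₀ hstep (by nlinarith) (by omega)
  have hval : C * (((n : ℝ) - 2) / (2 * Ck) * P) ^ k = ((((n : ℝ) - 2) / 2) * P) ^ k := by
    have hckne : Ck ≠ 0 := ne_of_gt hCk
    have key : (((n : ℝ) - 2) / (2 * Ck) * P) = ((((n : ℝ) - 2) / 2) * P) * Ck⁻¹ := by
      field_simp
    rw [key, mul_pow, inv_pow, hCkk, mul_comm, mul_assoc,
      inv_mul_cancel₀ hCne, mul_one]
  rw [hval] at hpow
  linarith


lemma deriv2_nonpos_of_localMax {ψ φ : ℝ → ℝ} {s : ℝ}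
    (hmax : IsLocalMax ψ 0) (hψ : ∀ᶠ t in nhds (0 : ℝ), HasDerivAt ψ (φ t) t)
    (hφ : HasDerivAt φ s 0) : s ≤ 0 := by
  by_contra hs
  push_neg at hs
  have hψ0 : HasDerivAt ψ (φ 0) 0 := hψ.self_of_nhds
  have hφ0 : φ 0 = 0 := hmax.hasDerivAt_eq_zero hψ0
  have hslope := hasDerivAt_iff_tendsto_slope.mp hφ
  have hpos : ∀ᶠ t in nhdsWithin (0 : ℝ) (Set.Ioi 0), 0 < φ t := by
    have h1 : ∀ᶠ t in nhdsWithin (0 : ℝ) {(0 : ℝ)}ᶜ, 0 < slope φ 0 t :=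
      hslope.eventually (lt_mem_nhds hs)
    have h2 : ∀ᶠ t in nhdsWithin (0 : ℝ) (Set.Ioi 0), 0 < slope φ 0 t :=
      h1.filter_mono (nhdsWithin_mono 0 (fun t ht => ne_of_gt ht))
    filter_upwards [h2, self_mem_nhdsWithin] with t h1' h2'
    have ht : (0 : ℝ) < t := h2'
    have : slope φ 0 t = φ t / t := by
      rw [slope_def_field, hφ0]
      ring_nf
    rw [this] at h1'
    have := mul_pos h1' ht
    rwa [div_mul_cancel₀ _ (ne_of_gt ht)] at this
  rw [eventually_nhdsWithin_iff] at hpos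
  have hall : ∀ᶠ t in nhds (0 : ℝ),
      HasDerivAt ψ (φ t) t ∧ ψ t ≤ ψ 0 ∧ (t ∈ Set.Ioi (0:ℝ) → 0 < φ t) :=
    hψ.and (hmax.and hpos)
  obtain ⟨ε, hε, hball⟩ := Metric.eventually_nhds_iff.mp hall
  set δ := ε / 2 with hδ
  have hδpos : 0 < δ := by positivity
  have hmem : ∀ t ∈ Set.Icc (0:ℝ) δ, dist t (0:ℝ) < ε := by
    intro t ht
    rw [Real.dist_eq, sub_zero, abs_of_nonneg ht.1]
    have := ht.2
    rw [hδ] at this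
    linarith
  have hmono : StrictMonoOn ψ (Set.Icc (0:ℝ) δ) := by
    refine strictMonoOn_of_deriv_pos (convex_Icc 0 δ) ?_ ?_
    · intro t ht
      exact ((hball (hmem t ht)).1).continuousAt.continuousWithinAt
    · intro t ht
      rw [interior_Icc] at ht
      have h' := hball (hmem t ⟨le_of_lt ht.1, le_of_lt ht.2⟩)
      rw [h'.1.deriv]
      exact h'.2.2 ht.1
  have h0mem : (0:ℝ) ∈ Set.Icc (0:ℝ) δ := ⟨le_refl _, hδpos.le⟩
  have hδmem : δ ∈ Set.Icc (0:ℝ) δ := ⟨hδpos.le, le_refl _⟩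
  have := hmono h0mem hδmem hδpos
  have hle := (hball (hmem δ hδmem)).2.1
  linarith

lemma line_second_le {n : ℕ} (F : Eucl n → ℝ) (F' : Eucl n → (Eucl n →L[ℝ] ℝ))
    (x : Eucl n) (v : Eucl n) (G : Eucl n →L[ℝ] ℝ)
    (hF : ∀ᶠ y in nhds x, HasFDerivAt F (F' y) y)
    (hG : HasFDerivAt (fun y => F' y v) G x)
    (hmax : IsLocalMax F x) : G v ≤ 0 := by
  set L : ℝ → Eucl n := fun t => x + t • v with hL
  have hL0 : L 0 = x := by simp [hL]
  have hLd : ∀ t, HasDerivAt L v t := by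
    intro t
    have h1 : HasDerivAt (fun t : ℝ => t • v) ((1:ℝ) • v) t := (hasDerivAt_id t).smul_const v
    simpa [hL] using h1.const_add x
  have hLc : Tendsto L (nhds 0) (nhds x) := by
    rw [← hL0]
    exact (hLd 0).continuousAt
  have hψ : ∀ᶠ t in nhds (0:ℝ), HasDerivAt (fun t => F (L t)) (F' (L t) v) t := by
    filter_upwards [hLc.eventually hF] with t ht
    exact ht.comp_hasDerivAt t (hLd t)
  have hφ : HasDerivAt (fun t => F' (L t) v) (G v) 0 := by
    have hGx : HasFDerivAt (fun y => F' y v) G (L 0) := by rw [hL0]; exact hG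
    exact hGx.comp_hasDerivAt 0 (hLd 0)
  have hmax' : IsLocalMax (fun t => F (L t)) 0 := by
    have h1 : ∀ᶠ t in nhds (0:ℝ), F (L t) ≤ F x := hLc.eventually hmax
    simpa [IsLocalMax, IsMaxFilter, hL0] using h1
  exact deriv2_nonpos_of_localMax hmax' hψ hφ


/-- `q(y) = ∑ yᵢ²`. -/
def qfun (n : ℕ) : Eucl n → ℝ := fun y => ∑ i, (y i) ^ 2

/-- derivative of `qfun`. -/
def Dqf (n : ℕ) (y : Eucl n) : Eucl n →L[ℝ] ℝ :=
  ∑ i, (2 * y i) • (EuclideanSpace.proj i : EuclideanSpace ℝ (Fin n) →L[ℝ] ℝ)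

set_option maxHeartbeats 1000000 in
lemma hasFDerivAt_qfun (n : ℕ) (y : Eucl n) : HasFDerivAt (qfun n) (Dqf n y) y := by
  have h : ∀ i : Fin n, HasFDerivAt
      (fun z : Eucl n => (EuclideanSpace.proj (𝕜 := ℝ) i) z * (EuclideanSpace.proj i) z)
      (((EuclideanSpace.proj (𝕜 := ℝ) i) y) • (EuclideanSpace.proj i)
        + ((EuclideanSpace.proj (𝕜 := ℝ) i) y) • (EuclideanSpace.proj i)) y :=
    fun i => ((EuclideanSpace.proj (𝕜 := ℝ) i).hasFDerivAt (x := y)).mul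
      ((EuclideanSpace.proj (𝕜 := ℝ) i).hasFDerivAt (x := y))
  have hsum := HasFDerivAt.fun_sum (fun i (_ : i ∈ Finset.univ) => h i)
  have hfun : (fun z : Eucl n =>
      ∑ i, (EuclideanSpace.proj (𝕜 := ℝ) i) z * (EuclideanSpace.proj i) z) = qfun n := by
    funext z
    rw [qfun]
    exact Finset.sum_congr rfl fun i _ => by simp [PiLp.proj_apply, sq]
  rw [hfun] at hsum
  have hD : Dqf n y = ∑ i, (((EuclideanSpace.proj (𝕜 := ℝ) i) y) • (EuclideanSpace.proj i)
      + ((EuclideanSpace.proj (𝕜 := ℝ) i) y) • (EuclideanSpace.proj i)) := by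
    apply ContinuousLinearMap.ext
    intro z
    rw [Dqf, ContinuousLinearMap.sum_apply, ContinuousLinearMap.sum_apply]
    refine Finset.sum_congr rfl fun i _ => ?_
    simp only [ContinuousLinearMap.smul_apply, ContinuousLinearMap.add_apply,
      PiLp.proj_apply, smul_eq_mul]
    ring
  rw [hD]
  exact hsum

lemma Dqf_apply (n : ℕ) (y : Eucl n) (j : Fin n) :
    Dqf n y (EuclideanSpace.single j 1) = 2 * y j := by
  rw [Dqf, ContinuousLinearMap.sum_apply]
  have h : ∀ i : Fin n, ((2 * y i) •
      (EuclideanSpace.proj i : EuclideanSpace ℝ (Fin n) →L[ℝ] ℝ))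
        (EuclideanSpace.single j 1)
      = (2 * y i) * (if i = j then 1 else 0) := by
    intro i
    rw [ContinuousLinearMap.smul_apply]
    simp [PiLp.proj_apply, EuclideanSpace.single_apply, eq_comm]
  rw [Finset.sum_congr rfl (fun i _ => h i)]
  simp

lemma qfun_eq_norm (n : ℕ) (y : Eucl n) : qfun n y = ‖y‖ ^ 2 := by
  rw [EuclideanSpace.norm_eq, Real.sq_sqrt (by positivity)]
  rw [qfun]
  exact Finset.sum_congr rfl fun i _ => by rw [Real.norm_eq_abs, sq_abs]

/-- The comparison function `U(y) = A (R² − |y|²)^{-n}`. -/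
def Ufun (n : ℕ) (R A : ℝ) : Eucl n → ℝ := fun y => A * (R ^ 2 - qfun n y) ^ (-(n : ℤ))

/-- First derivative of `Ufun`. -/
def DU (n : ℕ) (R A : ℝ) (y : Eucl n) : Eucl n →L[ℝ] ℝ :=
  (A * ((Int.cast (-(n : ℤ)) : ℝ) * (R ^ 2 - qfun n y) ^ (-(n : ℤ) - 1))) • (-(Dqf n y))

lemma hasFDerivAt_Ufun (n : ℕ) (R A : ℝ) (y : Eucl n) (hne : R ^ 2 - qfun n y ≠ 0) :
    HasFDerivAt (Ufun n R A) (DU n R A y) y := by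
  have hq := hasFDerivAt_qfun n y
  have hf : HasFDerivAt (fun z : Eucl n => R ^ 2 - qfun n z) (-(Dqf n y)) y := by
    simpa using hq.const_sub (R ^ 2)
  have hg : HasDerivAt (fun t : ℝ => A * t ^ (-(n : ℤ)))
      (A * ((Int.cast (-(n : ℤ)) : ℝ) * (R ^ 2 - qfun n y) ^ (-(n : ℤ) - 1)))
      (R ^ 2 - qfun n y) :=
    (hasDerivAt_zpow (-(n : ℤ)) _ (Or.inl hne)).const_mul A
  exact hg.comp_hasFDerivAt (f := fun z => R ^ 2 - qfun n z) y hf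

/-- Second derivative data for `Ufun` in direction `i`. -/
def D2U (n : ℕ) (R A : ℝ) (y : Eucl n) (i : Fin n) : Eucl n →L[ℝ] ℝ :=
  (-2 * A * (Int.cast (-(n : ℤ)) : ℝ)) •
    (((R ^ 2 - qfun n y) ^ (-(n : ℤ) - 1)) •
        (EuclideanSpace.proj i : EuclideanSpace ℝ (Fin n) →L[ℝ] ℝ)
      + ((EuclideanSpace.proj (𝕜 := ℝ) i) y) •
          ((Int.cast (-(n : ℤ) - 1) : ℝ) * (R ^ 2 - qfun n y) ^ (-(n : ℤ) - 1 - 1)) •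
            (-(Dqf n y)))

lemma hasFDerivAt_DUe (n : ℕ) (R A : ℝ) (y : Eucl n) (i : Fin n)
    (hne : R ^ 2 - qfun n y ≠ 0) :
    HasFDerivAt (fun z => DU n R A z (EuclideanSpace.single i 1)) (D2U n R A y i) y := by
  have hq := hasFDerivAt_qfun n y
  have hf : HasFDerivAt (fun z : Eucl n => R ^ 2 - qfun n z) (-(Dqf n y)) y := by
    simpa using hq.const_sub (R ^ 2)
  have h1 : HasFDerivAt (fun z : Eucl n => (R ^ 2 - qfun n z) ^ (-(n : ℤ) - 1))
      (((Int.cast (-(n : ℤ) - 1) : ℝ) * (R ^ 2 - qfun n y) ^ (-(n : ℤ) - 1 - 1)) • (-(Dqf n y)))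
      y := by
    have hg : HasDerivAt (fun t : ℝ => t ^ (-(n : ℤ) - 1))
        ((Int.cast (-(n : ℤ) - 1) : ℝ) * (R ^ 2 - qfun n y) ^ (-(n : ℤ) - 1 - 1))
        (R ^ 2 - qfun n y) := hasDerivAt_zpow (-(n : ℤ) - 1) _ (Or.inl hne)
    exact hg.comp_hasFDerivAt y hf
  have h2 : HasFDerivAt (fun z : Eucl n => (EuclideanSpace.proj (𝕜 := ℝ) i) z)
      (EuclideanSpace.proj i : EuclideanSpace ℝ (Fin n) →L[ℝ] ℝ) y :=
    (EuclideanSpace.proj (𝕜 := ℝ) i).hasFDerivAt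
  have h3 := (h1.mul h2).const_mul (-2 * A * (Int.cast (-(n : ℤ)) : ℝ))
  have heq : (fun z => DU n R A z (EuclideanSpace.single i 1)) =ᶠ[nhds y]
      (fun z : Eucl n => -2 * A * (Int.cast (-(n : ℤ)) : ℝ) *
        ((R ^ 2 - qfun n z) ^ (-(n : ℤ) - 1) * (EuclideanSpace.proj (𝕜 := ℝ) i) z)) := by
    refine Filter.Eventually.of_forall ?_
    intro z
    simp only [DU]
    rw [ContinuousLinearMap.smul_apply, ContinuousLinearMap.neg_apply, Dqf_apply]
    simp only [PiLp.proj_apply, smul_eq_mul]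
    push_cast
    ring
  have h4 := h3.congr_of_eventuallyEq heq
  simp only [D2U]
  exact h4

lemma D2U_apply (n : ℕ) (R A : ℝ) (y : Eucl n) (i : Fin n) :
    D2U n R A y i (EuclideanSpace.single i 1)
      = (2 * A * (n : ℝ)) * ((R ^ 2 - qfun n y) ^ (-(n : ℤ) - 1)
            + (y i) * ((-(n : ℝ) - 1) * (R ^ 2 - qfun n y) ^ (-(n : ℤ) - 1 - 1)
                * (-(2 * y i)))) := by
  rw [D2U]
  rw [ContinuousLinearMap.smul_apply, ContinuousLinearMap.add_apply,
    ContinuousLinearMap.smul_apply, ContinuousLinearMap.smul_apply,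
    ContinuousLinearMap.smul_apply, ContinuousLinearMap.neg_apply, Dqf_apply]
  simp only [PiLp.proj_apply, EuclideanSpace.single_apply, if_pos rfl, smul_eq_mul]
  push_cast
  ring


lemma arith_bound (n : ℕ) (hn : 3 ≤ n) (c R t Q A : ℝ) (hc : 0 < c) (hR : 0 < R)
    (ht : 0 < t) (htR : t ≤ R ^ 2) (hQ : 0 ≤ Q) (hQR : Q ≤ R ^ 2)
    (hA : A = ((2 * (n : ℝ) * (3 * (n : ℝ) + 2)) / c) ^ (((n : ℝ) - 2) / 4)
        * R ^ ((2 * ((n : ℝ) * (((n : ℝ) + 2) / ((n : ℝ) - 2)) - (n : ℝ) - 1))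
            / ((((n : ℝ) + 2) / ((n : ℝ) - 2)) - 1))) :
    2 * A * (n : ℝ) * ((n : ℝ) * t ^ (-(n : ℤ) - 1)
        + (2 * (n : ℝ) + 2) * t ^ (-(n : ℤ) - 1 - 1) * Q)
      ≤ c * (A * t ^ (-(n : ℤ))) ^ (((n : ℝ) + 2) / ((n : ℝ) - 2)) := by
  have hn3 : (3 : ℝ) ≤ (n : ℝ) := by exact_mod_cast hn
  have hn2 : (0 : ℝ) < (n : ℝ) - 2 := by linarith
  set p : ℝ := ((n : ℝ) + 2) / ((n : ℝ) - 2) with hp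
  have hp1 : 1 < p := by
    rw [hp, lt_div_iff₀ hn2]
    linarith
  have hpm : p - 1 = 4 / ((n : ℝ) - 2) := by
    rw [hp]
    field_simp
    norm_num
  have hpm0 : p - 1 ≠ 0 := by
    rw [hpm]; positivity
  set K : ℝ := 2 * (n : ℝ) * (3 * (n : ℝ) + 2) with hK
  have hKpos : 0 < K := by rw [hK]; nlinarith
  set a : ℝ := (K / c) ^ (((n : ℝ) - 2) / 4) with ha
  have hapos : 0 < a := by
    rw [ha]; exact Real.rpow_pos_of_pos (by positivity) _
  set σ : ℝ := (2 * ((n : ℝ) * p - (n : ℝ) - 1)) / (p - 1) with hσ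
  have hA' : A = a * R ^ σ := hA
  have hA0 : 0 < A := by rw [hA']; positivity
  -- zpow to rpow conversions
  have hz1 : t ^ (-(n : ℤ)) = t ^ (-(n : ℝ)) := by
    rw [← Real.rpow_intCast t (-(n : ℤ))]; norm_num
  have hz2 : t ^ (-(n : ℤ) - 1) = t ^ (-(n : ℝ) - 1) := by
    rw [← Real.rpow_intCast t (-(n : ℤ) - 1)]; congr 1; push_cast; ring
  have hz3 : t ^ (-(n : ℤ) - 1 - 1) = t ^ (-(n : ℝ) - 2) := by
    rw [← Real.rpow_intCast t (-(n : ℤ) - 1 - 1)]; congr 1; push_cast; ring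
  rw [hz1, hz2, hz3]
  -- LHS bound: L ≤ A * K * R^2 * t^(-n-2)
  have hsplit : t ^ (-(n : ℝ) - 1) = t ^ (-(n : ℝ) - 2) * t := by
    rw [show -(n : ℝ) - 1 = (-(n : ℝ) - 2) + 1 by ring, Real.rpow_add ht, Real.rpow_one]
  have ht2 : (0 : ℝ) < t ^ (-(n : ℝ) - 2) := Real.rpow_pos_of_pos ht _
  have hL : 2 * A * (n : ℝ) * ((n : ℝ) * t ^ (-(n : ℝ) - 1)
      + (2 * (n : ℝ) + 2) * t ^ (-(n : ℝ) - 2) * Q)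
      ≤ A * K * R ^ 2 * t ^ (-(n : ℝ) - 2) := by
    rw [hsplit]
    have hfac : (n : ℝ) * t + (2 * (n : ℝ) + 2) * Q ≤ (3 * (n : ℝ) + 2) * R ^ 2 := by
      nlinarith
    have h2An : (0 : ℝ) ≤ 2 * A * (n : ℝ) := by positivity
    have := mul_le_mul_of_nonneg_left hfac (mul_nonneg h2An ht2.le)
    calc 2 * A * (n : ℝ) * ((n : ℝ) * (t ^ (-(n : ℝ) - 2) * t)
          + (2 * (n : ℝ) + 2) * t ^ (-(n : ℝ) - 2) * Q)
        = 2 * A * (n : ℝ) * t ^ (-(n : ℝ) - 2) * ((n : ℝ) * t + (2 * (n : ℝ) + 2) * Q) := by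
          ring
      _ ≤ 2 * A * (n : ℝ) * t ^ (-(n : ℝ) - 2) * ((3 * (n : ℝ) + 2) * R ^ 2) := this
      _ = A * K * R ^ 2 * t ^ (-(n : ℝ) - 2) := by rw [hK]; ring
  -- RHS identity: c * (A t^{-n})^p = A * K * R^{2(np-n-1)} * t^{-n p}
  have ha1 : a ^ (p - 1) = K / c := by
    rw [ha, ← Real.rpow_mul (by positivity : (0:ℝ) ≤ K / c), hpm,
      show ((n : ℝ) - 2) / 4 * (4 / ((n : ℝ) - 2)) = 1 by field_simp]
    exact Real.rpow_one _
  have hR1 : (R ^ σ) ^ (p - 1) = R ^ (2 * ((n : ℝ) * p - (n : ℝ) - 1)) := by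
    rw [← Real.rpow_mul hR.le]
    congr 1
    rw [hσ]
    field_simp
  have hApm : A ^ (p - 1) = (K / c) * R ^ (2 * ((n : ℝ) * p - (n : ℝ) - 1)) := by
    rw [hA', Real.mul_rpow hapos.le (Real.rpow_nonneg hR.le _), ha1, hR1]
  have hApow : A ^ p = A * ((K / c) * R ^ (2 * ((n : ℝ) * p - (n : ℝ) - 1))) := by
    rw [← hApm, show p = 1 + (p - 1) by ring, Real.rpow_add hA0, Real.rpow_one]
    ring_nf
  have hRHS : c * (A * t ^ (-(n : ℝ))) ^ p
      = A * K * R ^ (2 * ((n : ℝ) * p - (n : ℝ) - 1)) * t ^ (-(n : ℝ) * p) := by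
    rw [Real.mul_rpow hA0.le (Real.rpow_nonneg ht.le _), ← Real.rpow_mul ht.le, hApow]
    have hKc : c * (K / c) = K := by rw [mul_comm]; exact div_mul_cancel₀ K hc.ne'
    linear_combination A * R ^ (2 * ((n : ℝ) * p - (n : ℝ) - 1)) * t ^ (-(n : ℝ) * p) * hKc
  -- comparison of powers of t
  have hstep2 : A * K * R ^ 2 * t ^ (-(n : ℝ) - 2)
      ≤ A * K * R ^ (2 * ((n : ℝ) * p - (n : ℝ) - 1)) * t ^ (-(n : ℝ) * p) := by
    have hts : t ^ (-(n : ℝ) - 2) = t ^ (-(n : ℝ) * p) * t ^ ((n : ℝ) * p - (n : ℝ) - 2) := by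
      rw [← Real.rpow_add ht]; congr 1; ring
    have hexp : (0 : ℝ) ≤ (n : ℝ) * p - (n : ℝ) - 2 := by
      have he : (n : ℝ) * p - (n : ℝ) - 2 = (2 * ((n : ℝ) + 2)) / ((n : ℝ) - 2) := by
        rw [hp]; field_simp; ring
      rw [he]
      exact div_nonneg (by linarith) hn2.le
    have hcmp : t ^ ((n : ℝ) * p - (n : ℝ) - 2) ≤ (R ^ 2) ^ ((n : ℝ) * p - (n : ℝ) - 2) :=
      Real.rpow_le_rpow ht.le htR hexp
    have h2R : (R : ℝ) ^ (2 : ℕ) = R ^ ((2 : ℕ) : ℝ) := (Real.rpow_natCast R 2).symm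
    have hRe : R ^ 2 * (R ^ 2) ^ ((n : ℝ) * p - (n : ℝ) - 2)
        = R ^ (2 * ((n : ℝ) * p - (n : ℝ) - 1)) := by
      rw [h2R, ← Real.rpow_mul hR.le, ← Real.rpow_add hR]
      congr 1
      push_cast
      ring
    have htp : (0 : ℝ) < t ^ (-(n : ℝ) * p) := Real.rpow_pos_of_pos ht _
    calc A * K * R ^ 2 * t ^ (-(n : ℝ) - 2)
        = (A * K * t ^ (-(n : ℝ) * p) * R ^ 2) * t ^ ((n : ℝ) * p - (n : ℝ) - 2) := by
          rw [hts]; ring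
      _ ≤ (A * K * t ^ (-(n : ℝ) * p) * R ^ 2) * (R ^ 2) ^ ((n : ℝ) * p - (n : ℝ) - 2) := by
          refine mul_le_mul_of_nonneg_left hcmp ?_
          positivity
      _ = A * K * (R ^ 2 * (R ^ 2) ^ ((n : ℝ) * p - (n : ℝ) - 2)) * t ^ (-(n : ℝ) * p) := by
          ring
      _ = A * K * R ^ (2 * ((n : ℝ) * p - (n : ℝ) - 1)) * t ^ (-(n : ℝ) * p) := by
          rw [hRe]
  calc 2 * A * (n : ℝ) * ((n : ℝ) * t ^ (-(n : ℝ) - 1)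
        + (2 * (n : ℝ) + 2) * t ^ (-(n : ℝ) - 2) * Q)
      ≤ A * K * R ^ 2 * t ^ (-(n : ℝ) - 2) := hL
    _ ≤ A * K * R ^ (2 * ((n : ℝ) * p - (n : ℝ) - 1)) * t ^ (-(n : ℝ) * p) := hstep2
    _ = c * (A * t ^ (-(n : ℝ))) ^ p := hRHS.symm

lemma no_entire (n : ℕ) (hn : 3 ≤ n) (c : ℝ) (hc : 0 < c) (u : Eucl n → ℝ)
    (hu : ContDiff ℝ 2 u) (hupos : ∀ x, 0 < u x)
    (hineq : ∀ x, c * (u x) ^ (((n : ℝ) + 2) / ((n : ℝ) - 2)) ≤ ∑ l, pd2 n u x l l) :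
    False := by
  have hn3 : (3 : ℝ) ≤ (n : ℝ) := by exact_mod_cast hn
  have hn2 : (0 : ℝ) < (n : ℝ) - 2 := by linarith
  set p : ℝ := ((n : ℝ) + 2) / ((n : ℝ) - 2) with hp
  have hp1 : 1 < p := by
    rw [hp, lt_div_iff₀ hn2]; linarith
  have hpm0 : p - 1 ≠ 0 := by linarith
  set a : ℝ := ((2 * (n : ℝ) * (3 * (n : ℝ) + 2)) / c) ^ (((n : ℝ) - 2) / 4) with ha
  have hapos : 0 < a := Real.rpow_pos_of_pos (by positivity) _
  set s0 : ℝ := 2 / (p - 1) with hs0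
  have hs0pos : 0 < s0 := by rw [hs0]; exact div_pos two_pos (by linarith)
  have key : ∀ R : ℝ, 0 < R → u 0 ≤ a * R ^ (-s0) := by
    intro R hR
    set A : ℝ := a * R ^ ((2 * ((n : ℝ) * p - (n : ℝ) - 1)) / (p - 1)) with hA
    have hA0 : 0 < A := by rw [hA]; positivity
    have hfball : ∀ y ∈ Metric.ball (0 : Eucl n) R, 0 < R ^ 2 - qfun n y := by
      intro y hy
      rw [mem_ball_zero_iff] at hy
      rw [qfun_eq_norm]
      nlinarith [norm_nonneg y]
    have hUpos : ∀ y ∈ Metric.ball (0 : Eucl n) R, 0 < Ufun n R A y := by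
      intro y hy
      rw [Ufun]
      exact mul_pos hA0 (zpow_pos (hfball y hy) _)
    obtain ⟨xB, hxBmem, hxB⟩ := (isCompact_closedBall (0 : Eucl n) R).exists_isMaxOn
      ⟨0, mem_closedBall_self hR.le⟩ hu.continuous.continuousOn
    have hq0 : qfun n (0 : Eucl n) = 0 := by
      rw [qfun]
      refine Finset.sum_eq_zero fun i _ => ?_
      simp
    have hU0 : Ufun n R A 0 = A * (R ^ 2) ^ (-(n : ℤ)) := by rw [Ufun, hq0, sub_zero]
    have hU0pos : 0 < Ufun n R A 0 := by
      rw [hU0]; exact mul_pos hA0 (zpow_pos (by positivity) _)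
    set M : ℝ := u xB + Ufun n R A 0 with hM
    have hMpos : 0 < M := by
      have := hupos xB
      rw [hM]; linarith
    set δ : ℝ := min (R ^ 2) ((A / M) ^ (1 / (n : ℝ))) with hδ
    have hδpos : 0 < δ := lt_min (by positivity) (Real.rpow_pos_of_pos (by positivity) _)
    have hδR : δ ≤ R ^ 2 := min_le_left _ _
    have hδpow : δ ^ (n : ℕ) ≤ A / M := by
      have h1 : δ ≤ (A / M) ^ (1 / (n : ℝ)) := min_le_right _ _
      have h2 : δ ^ (n : ℕ) ≤ ((A / M) ^ (1 / (n : ℝ))) ^ (n : ℕ) :=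
        pow_le_pow_left₀ hδpos.le h1 n
      have h3 : ((A / M) ^ (1 / (n : ℝ))) ^ (n : ℕ) = A / M := by
        rw [← Real.rpow_natCast ((A / M) ^ (1 / (n : ℝ))) n,
          ← Real.rpow_mul (by positivity), one_div,
          inv_mul_cancel₀ (Nat.cast_ne_zero.mpr (by omega : n ≠ 0)), Real.rpow_one]
      linarith
    have hUbig : ∀ y ∈ Metric.ball (0 : Eucl n) R, R ^ 2 - qfun n y ≤ δ →
        M ≤ Ufun n R A y := by
      intro y hy hyδ
      have ht : 0 < R ^ 2 - qfun n y := hfball y hy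
      have htn : (R ^ 2 - qfun n y) ^ (n : ℕ) ≤ δ ^ (n : ℕ) := pow_le_pow_left₀ ht.le hyδ n
      have htn' : (R ^ 2 - qfun n y) ^ (n : ℕ) ≤ A / M := le_trans htn hδpow
      have hUy : Ufun n R A y = A / (R ^ 2 - qfun n y) ^ (n : ℕ) := by
        rw [Ufun, zpow_neg, zpow_natCast, div_eq_mul_inv]
      rw [hUy, le_div_iff₀ (pow_pos ht n)]
      calc M * (R ^ 2 - qfun n y) ^ (n : ℕ) ≤ M * (A / M) :=
            mul_le_mul_of_nonneg_left htn' hMpos.le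
        _ = A := by rw [mul_comm, div_mul_cancel₀ A hMpos.ne']
    set r : ℝ := Real.sqrt (R ^ 2 - δ) with hr
    have hr2 : r ^ 2 = R ^ 2 - δ := Real.sq_sqrt (by linarith)
    have hrR : r < R := by
      have h1 : Real.sqrt (R ^ 2 - δ) < Real.sqrt (R ^ 2) :=
        Real.sqrt_lt_sqrt (by linarith) (by linarith)
      rwa [Real.sqrt_sq hR.le] at h1
    have hsub : Metric.closedBall (0 : Eucl n) r ⊆ Metric.ball (0 : Eucl n) R := by
      intro y hy
      rw [mem_closedBall_zero_iff] at hy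
      rw [mem_ball_zero_iff]
      exact lt_of_le_of_lt hy hrR
    set w : Eucl n → ℝ := fun y => u y - Ufun n R A y with hw
    have hwcont : ContinuousOn w (Metric.closedBall (0 : Eucl n) r) := by
      refine ContinuousOn.sub hu.continuous.continuousOn ?_
      intro y hy
      exact ((hasFDerivAt_Ufun n R A y (hfball y (hsub hy)).ne').differentiableAt
        |>.continuousAt).continuousWithinAt
    obtain ⟨x₀, hx₀mem, hx₀max⟩ := (isCompact_closedBall (0 : Eucl n) r).exists_isMaxOn
      ⟨0, mem_closedBall_self (Real.sqrt_nonneg _)⟩ hwcont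
    have hx₀ball : x₀ ∈ Metric.ball (0 : Eucl n) R := hsub hx₀mem
    have hmaxball : ∀ y ∈ Metric.ball (0 : Eucl n) R, w y ≤ w x₀ := by
      intro y hy
      by_cases hyr : ‖y‖ ≤ r
      · exact hx₀max (mem_closedBall_zero_iff.mpr hyr)
      · push_neg at hyr
        have hq2 : R ^ 2 - qfun n y ≤ δ := by
          rw [qfun_eq_norm]
          have h1 : r ^ 2 ≤ ‖y‖ ^ 2 := by
            refine pow_le_pow_left₀ (Real.sqrt_nonneg _) hyr.le 2
          nlinarith
        have hU := hUbig y hy hq2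
        have huy : u y ≤ u xB := hxB (Metric.ball_subset_closedBall hy)
        have hw0' : w 0 ≤ w x₀ := hx₀max (mem_closedBall_self (Real.sqrt_nonneg _))
        have hu0 : 0 < u 0 := hupos 0
        have hMle : u xB + Ufun n R A 0 ≤ Ufun n R A y := hU
        have : w y ≤ w 0 := by
          show u y - Ufun n R A y ≤ u 0 - Ufun n R A 0
          linarith
        linarith
    have hislocal : IsLocalMax w x₀ :=
      Filter.eventually_of_mem (isOpen_ball.mem_nhds hx₀ball) hmaxball
    have hudiff : ∀ y : Eucl n, HasFDerivAt u (fderiv ℝ u y) y := fun y =>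
      ((hu.differentiable (by norm_num)) y).hasFDerivAt
    have hF : ∀ᶠ y in nhds x₀, HasFDerivAt w ((fderiv ℝ u y) - DU n R A y) y := by
      filter_upwards [isOpen_ball.mem_nhds hx₀ball] with y hy
      exact (hudiff y).sub (hasFDerivAt_Ufun n R A y (hfball y hy).ne')
    have hline : ∀ i : Fin n,
        pd2 n u x₀ i i ≤ D2U n R A x₀ i (EuclideanSpace.single i 1) := by
      intro i
      have hc1 : ContDiff ℝ 1 (fderiv ℝ u) := hu.fderiv_right (by norm_num)
      have hdiffu : DifferentiableAt ℝ
          (fun y => fderiv ℝ u y (EuclideanSpace.single i 1)) x₀ :=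
        DifferentiableAt.clm_apply ((hc1.differentiable one_ne_zero) x₀)
          (differentiableAt_const _)
      have hG : HasFDerivAt
          (fun y => ((fderiv ℝ u y) - DU n R A y) (EuclideanSpace.single i 1))
          (fderiv ℝ (fun y => fderiv ℝ u y (EuclideanSpace.single i 1)) x₀
            - D2U n R A x₀ i) x₀ := by
        have h1 := hdiffu.hasFDerivAt
        have h2 := hasFDerivAt_DUe n R A x₀ i (hfball x₀ hx₀ball).ne'
        have h3 := h1.sub h2
        refine h3.congr_of_eventuallyEq (Filter.Eventually.of_forall fun y => ?_)
        simp [ContinuousLinearMap.sub_apply]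
      have hres := line_second_le w (fun y => (fderiv ℝ u y) - DU n R A y) x₀
        (EuclideanSpace.single i 1) _ hF hG hislocal
      rw [ContinuousLinearMap.sub_apply] at hres
      have hpd : pd2 n u x₀ i i
          = fderiv ℝ (fun y => fderiv ℝ u y (EuclideanSpace.single i 1)) x₀
              (EuclideanSpace.single i 1) := rfl
      linarith
    have hq0nn : 0 ≤ qfun n x₀ := by
      rw [qfun]; exact Finset.sum_nonneg fun i _ => sq_nonneg _
    have ht₀ : 0 < R ^ 2 - qfun n x₀ := hfball x₀ hx₀ball
    have hsum : ∑ i, D2U n R A x₀ i (EuclideanSpace.single i 1)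
        = 2 * A * (n : ℝ) * ((n : ℝ) * (R ^ 2 - qfun n x₀) ^ (-(n : ℤ) - 1)
            + (2 * (n : ℝ) + 2) * (R ^ 2 - qfun n x₀) ^ (-(n : ℤ) - 1 - 1) * qfun n x₀) := by
      rw [Finset.sum_congr rfl (fun i _ => D2U_apply n R A x₀ i)]
      have hterm : ∀ i : Fin n,
          (2 * A * (n : ℝ)) * ((R ^ 2 - qfun n x₀) ^ (-(n : ℤ) - 1)
            + (x₀ i) * ((-(n : ℝ) - 1) * (R ^ 2 - qfun n x₀) ^ (-(n : ℤ) - 1 - 1)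
                * (-(2 * x₀ i))))
          = 2 * A * (n : ℝ) * (R ^ 2 - qfun n x₀) ^ (-(n : ℤ) - 1)
            + (2 * A * (n : ℝ) * ((2 * (n : ℝ) + 2)
                * (R ^ 2 - qfun n x₀) ^ (-(n : ℤ) - 1 - 1))) * (x₀ i) ^ 2 := fun i => by
        ring
      rw [Finset.sum_congr rfl (fun i _ => hterm i)]
      rw [Finset.sum_add_distrib, Finset.sum_const, Finset.card_univ, Fintype.card_fin,
        nsmul_eq_mul, ← Finset.mul_sum, ← qfun]
      ring
    have hΔle : ∑ l, pd2 n u x₀ l l ≤ c * (Ufun n R A x₀) ^ p := by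
      have harith := arith_bound n hn c R (R ^ 2 - qfun n x₀) (qfun n x₀) A hc hR ht₀
        (by linarith) hq0nn (by linarith)
        (by rw [hA, hp, ha])
      calc ∑ l, pd2 n u x₀ l l
          ≤ ∑ i, D2U n R A x₀ i (EuclideanSpace.single i 1) :=
            Finset.sum_le_sum fun i _ => hline i
        _ = 2 * A * (n : ℝ) * ((n : ℝ) * (R ^ 2 - qfun n x₀) ^ (-(n : ℤ) - 1)
              + (2 * (n : ℝ) + 2) * (R ^ 2 - qfun n x₀) ^ (-(n : ℤ) - 1 - 1) * qfun n x₀) :=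
            hsum
        _ ≤ c * (A * (R ^ 2 - qfun n x₀) ^ (-(n : ℤ))) ^ (((n : ℝ) + 2) / ((n : ℝ) - 2)) :=
            harith
        _ = c * (Ufun n R A x₀) ^ p := by rw [Ufun, hp]
    have hux₀ := hineq x₀
    have hup : (u x₀) ^ p ≤ (Ufun n R A x₀) ^ p := by
      have h1 : c * (u x₀) ^ p ≤ c * (Ufun n R A x₀) ^ p := le_trans hux₀ hΔle
      exact (mul_le_mul_iff_right₀ hc).mp h1
    have hULx₀ : u x₀ ≤ Ufun n R A x₀ := by
      by_contra hcon
      push_neg at hcon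
      have hUpos' : 0 < Ufun n R A x₀ := hUpos x₀ hx₀ball
      have := Real.rpow_lt_rpow hUpos'.le hcon (by linarith : 0 < p)
      linarith
    have hw0 : w 0 ≤ w x₀ := hx₀max (mem_closedBall_self (Real.sqrt_nonneg _))
    have hu0U0 : u 0 ≤ Ufun n R A 0 := by
      have h1 : u 0 - Ufun n R A 0 ≤ u x₀ - Ufun n R A x₀ := hw0
      linarith
    have hval : Ufun n R A 0 = a * R ^ (-s0) := by
      rw [hU0, hA]
      have h1 : ((R : ℝ) ^ 2) ^ (-(n : ℤ)) = R ^ (-(2 * (n : ℝ))) := by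
        rw [← Real.rpow_intCast (R ^ 2) (-(n : ℤ)),
          show ((R : ℝ) ^ (2 : ℕ)) = R ^ ((2 : ℕ) : ℝ) from (Real.rpow_natCast R 2).symm,
          ← Real.rpow_mul hR.le]
        congr 1
        push_cast
        ring
      rw [h1, mul_assoc, ← Real.rpow_add hR]
      congr 1
      rw [hs0, hp]
      field_simp
      ring
    rw [hval] at hu0U0
    exact hu0U0
  have htend : Tendsto (fun R : ℝ => a * R ^ (-s0)) atTop (nhds 0) := by
    have h1 := (tendsto_rpow_neg_atTop hs0pos).const_mul a
    simpa using h1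
  have hev : ∀ᶠ R in atTop, a * R ^ (-s0) < u 0 := htend.eventually (gt_mem_nhds (hupos 0))
  obtain ⟨R, hR1, hR2⟩ := (hev.and (eventually_gt_atTop (0 : ℝ))).exists
  exact absurd (key R hR2) (not_le.mpr hR1)

/-- Nonexistence of entire positive admissible solutions of (*) on ℝⁿ. -/
theorem stmt9 (n k : ℕ) (hn : 3 ≤ n) (hk1 : 1 ≤ k) (hkn : k ≤ n) :
    ¬ ∃ u : Eucl n → ℝ, ContDiff ℝ 2 u ∧ (∀ x, 0 < u x) ∧
      Admissible n k Set.univ u ∧ (∀ x, EqStar n k u x) := by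
  rintro ⟨u, hu, hupos, hadm, heqs⟩
  have hn3 : (3 : ℝ) ≤ (n : ℝ) := by exact_mod_cast hn
  have hchoose : (0 : ℝ) < (n.choose k : ℝ) := by exact_mod_cast Nat.choose_pos hkn
  have hc : 0 < ((n : ℝ) - 2) / (4 * ((n : ℝ) - 1) * ((n.choose k : ℝ) ^ ((1 : ℝ) / k))) := by
    have h1 : (0 : ℝ) < (n.choose k : ℝ) ^ ((1 : ℝ) / k) := Real.rpow_pos_of_pos hchoose _
    have h2 : (0 : ℝ) < 4 * ((n : ℝ) - 1) := by linarith
    exact div_pos (by linarith) (by positivity)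
  refine no_entire n hn _ hc u hu hupos ?_
  intro x
  exact laplacian_lower n k hn hk1 hkn u x (hupos x) (hadm x (Set.mem_univ x)) (heqs x)
end
end
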